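/- Let G be a finite connected graph with center C_G satisfying the uniform eccentricity property d_G(C_G, v) = ecc_G(v) − rad(G) for all v, and let φ : G → H be a surjective map satisfying (1/A)·d_G(x,y) − B ≤ d_H(φ(x),φ(y)) ≤ d_G(x,y) for all x,y. Then the center-shift d_G(C_G, φ⁻¹(C_H)) is at most (A−1)·rad(H) + A·B. -/

import Mathlib

open SimpleGraph

/-- The eccentricity of a vertex: the maximum distance to any vertex. -/
noncomputable def ecc {V : Type*} [Fintype V] (G : SimpleGraph V) (v : V) : ℕ :=
  Finset.univ.sup (fun u => G.dist v u)

/-- The radius: the minimum eccentricity. -/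
noncomputable def grad {V : Type*} [Fintype V] (G : SimpleGraph V) : ℕ :=
  sInf {n : ℕ | ∃ v : V, ecc G v = n}

/-- The center: the set of vertices of minimum eccentricity. -/
noncomputable def center {V : Type*} [Fintype V] (G : SimpleGraph V) : Set V :=
  {v : V | ecc G v = grad G}

/-- The center-shift of a surjective map `φ : G → H`: the minimum `G`-distance
between a center vertex of `G` and a preimage of a center vertex of `H`. -/
noncomputable def centerShift {V W : Type*} [Fintype V] [Fintype W]
    (G : SimpleGraph V) (H : SimpleGraph W) (φ : V → W) : ℕ :=
  sInf {n : ℕ | ∃ u v : V, u ∈ _root_.center G ∧ φ v ∈ _root_.center H ∧ G.dist u v = n}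

/-- If `G` satisfies the uniform eccentricity property and `φ : G → H` is a
surjective one-sided quasi-isometry, then the center-shift is at most
`(A - 1)·rad(H) + A·B`. -/
theorem centerShift_le_one_sided {V W : Type*} [Fintype V] [Fintype W]
    (G : SimpleGraph V) (H : SimpleGraph W)
    (hG : G.Connected) (hH : H.Connected)
    (huniecc : ∀ v : V, sInf {n : ℕ | ∃ c ∈ _root_.center G, G.dist c v = n} =
      ecc G v - grad G)
    (A B : ℝ) (hA : 1 ≤ A) (hB : 0 ≤ B)
    (φ : V → W) (hsurj : Function.Surjective φ)
    (hQ1 : ∀ x y : V, (1 / A) * G.dist x y - B ≤ (H.dist (φ x) (φ y) : ℝ) ∧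
        (H.dist (φ x) (φ y) : ℝ) ≤ (G.dist x y : ℝ)) :
    (centerShift G H φ : ℝ) ≤ (A - 1) * grad H + A * B := by
  have hVne : Nonempty V := hG.nonempty
  have hWne : Nonempty W := hH.nonempty
  have hA0 : (0:ℝ) < A := lt_of_lt_of_le one_pos hA
  obtain ⟨w, hw⟩ : ∃ w : W, ecc H w = grad H :=
    Nat.sInf_mem (⟨ecc H (Classical.arbitrary W), ⟨_, rfl⟩⟩ :
      {n : ℕ | ∃ v, ecc H v = n}.Nonempty)
  obtain ⟨c, hc⟩ : ∃ c : V, ecc G c = grad G :=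
    Nat.sInf_mem (⟨ecc G (Classical.arbitrary V), ⟨_, rfl⟩⟩ :
      {n : ℕ | ∃ v, ecc G v = n}.Nonempty)
  obtain ⟨v, hv⟩ := hsurj w
  have hset : ({n : ℕ | ∃ c ∈ _root_.center G, G.dist c v = n}).Nonempty :=
    ⟨G.dist c v, c, hc, rfl⟩
  obtain ⟨c', hc', hd⟩ := Nat.sInf_mem hset
  have h1 : centerShift G H φ ≤ ecc G v - grad G := by
    rw [← huniecc v, ← hd]
    exact Nat.sInf_le ⟨c', v, hc', by rw [hv]; exact hw, rfl⟩
  have hHG : grad H ≤ grad G := by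
    have h2 : grad H ≤ ecc H (φ c) := Nat.sInf_le ⟨φ c, rfl⟩
    have h3 : ecc H (φ c) ≤ ecc G c := by
      apply Finset.sup_le
      intro u _
      obtain ⟨x, hx⟩ := hsurj u
      calc H.dist (φ c) u = H.dist (φ c) (φ x) := by rw [hx]
        _ ≤ G.dist c x := by exact_mod_cast (hQ1 c x).2
        _ ≤ ecc G c := Finset.le_sup (Finset.mem_univ x)
    exact h2.trans (h3.trans_eq hc)
  have hgv : grad G ≤ ecc G v := Nat.sInf_le ⟨v, rfl⟩
  have hecc : (ecc G v : ℝ) ≤ A * grad H + A * B := by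
    obtain ⟨u, -, hu⟩ := Finset.exists_mem_eq_sup Finset.univ Finset.univ_nonempty
      (fun u => G.dist v u)
    have hdH : (H.dist (φ v) (φ u) : ℝ) ≤ grad H := by
      rw [hv, ← hw]
      exact_mod_cast Finset.le_sup (Finset.mem_univ (φ u))
    have hq := (hQ1 v u).1
    have hue : (ecc G v : ℝ) = G.dist v u := by exact_mod_cast congrArg Nat.cast hu
    rw [hue]
    rw [div_mul_eq_mul_div, one_mul] at hq
    rw [sub_le_iff_le_add, div_le_iff₀ hA0] at hq
    nlinarith
  calc (centerShift G H φ : ℝ) ≤ ((ecc G v - grad G : ℕ) : ℝ) := by exact_mod_cast h1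
    _ = (ecc G v : ℝ) - grad G := by rw [Nat.cast_sub hgv]
    _ ≤ (A * grad H + A * B) - grad H := by
        have h5 : (grad H : ℝ) ≤ grad G := by exact_mod_cast hHG
        linarith
    _ = (A - 1) * grad H + A * B := by ring
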